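/- Let H be a compact group acting continuously, freely on a compact Hausdorff space M̃, with quotient M = M̃/H and quotient map q. Define on C(M̃) the C(M)-valued inner product ⟨φ₁, φ₂⟩(m) = ∫_H conj(φ₁(h·x)) φ₂(h·x) dh where q(x) = m (normalized Haar measure on H). Then this is well defined (independent of the choice of x in the fiber over m), ⟨φ, φ⟩(m) ≥ 0 for all m, and ⟨φ, φ⟩ = 0 implies φ = 0. -/

import Mathlib

open MeasureTheory

/-- A left Haar probability measure on a compact group is right invariant. -/
lemma haar_prob_isMulRightInvariant
    {H : Type*} [Group H] [TopologicalSpace H] [IsTopologicalGroup H]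
    [CompactSpace H] [MeasurableSpace H] [BorelSpace H]
    (μ : Measure H) [μ.IsHaarMeasure] [IsProbabilityMeasure μ] :
    μ.IsMulRightInvariant := by
  constructor
  intro g
  have h1 : IsProbabilityMeasure (Measure.map (· * g) μ) :=
    Measure.isProbabilityMeasure_map (measurable_mul_const g).aemeasurable
  exact Measure.isHaarMeasure_eq_of_isProbabilityMeasure (Measure.map (· * g) μ) μ

/-- The `C(M)`-valued inner product `⟨φ₁,φ₂⟩(m) = ∫_H conj(φ₁(h·x)) φ₂(h·x) dh`
(where `q x = m`) on `C(M̃)`, for a free action of a compact group `H` on a compact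
Hausdorff space `M̃`, is well defined on fibers, positive, and definite. -/
theorem morita_inner_product_well_defined
    {H X : Type*} [Group H] [TopologicalSpace H] [IsTopologicalGroup H]
    [CompactSpace H] [MeasurableSpace H] [BorelSpace H]
    (μ : Measure H) [μ.IsHaarMeasure] [IsProbabilityMeasure μ]
    [TopologicalSpace X] [CompactSpace X] [T2Space X]
    [MulAction H X] [ContinuousSMul H X]
    (hfree : ∀ (h : H) (x : X), h • x = x → h = 1)
    (I : C(X, ℂ) → C(X, ℂ) → X → ℂ)
    (hI : I = fun φ₁ φ₂ x => ∫ h : H, (starRingEnd ℂ) (φ₁ (h • x)) * φ₂ (h • x) ∂μ) :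
    -- well defined: the value only depends on the `H`-orbit of `x`
    (∀ (φ₁ φ₂ : C(X, ℂ)) (x y : X), (∃ h : H, h • x = y) → I φ₁ φ₂ x = I φ₁ φ₂ y) ∧
    -- positivity: `⟨φ,φ⟩(m) ≥ 0`
    (∀ (φ : C(X, ℂ)) (x : X), 0 ≤ (I φ φ x).re ∧ (I φ φ x).im = 0) ∧
    -- definiteness: `⟨φ,φ⟩ = 0` implies `φ = 0`
    (∀ φ : C(X, ℂ), (∀ x : X, I φ φ x = 0) → φ = 0) := by
  have hri : μ.IsMulRightInvariant := haar_prob_isMulRightInvariant μ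
  subst hI
  -- integrability of the integrand
  have hint : ∀ (φ₁ φ₂ : C(X, ℂ)) (x : X),
      Integrable (fun h : H => (starRingEnd ℂ) (φ₁ (h • x)) * φ₂ (h • x)) μ := by
    intro φ₁ φ₂ x
    apply Continuous.integrable_of_hasCompactSupport
    · exact ((Complex.continuous_conj.comp (φ₁.continuous.comp
        (continuous_id.smul continuous_const))).mul
        (φ₂.continuous.comp (continuous_id.smul continuous_const)))
    · exact HasCompactSupport.of_compactSpace _
  refine ⟨?_, ?_, ?_⟩
  · rintro φ₁ φ₂ x y ⟨h₀, rfl⟩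
    have := MeasureTheory.integral_mul_right_eq_self
      (μ := μ) (fun h : H => (starRingEnd ℂ) (φ₁ (h • x)) * φ₂ (h • x)) h₀
    simp only at this ⊢
    rw [← this]
    congr 1
    ext h
    rw [mul_smul]
  · intro φ x
    have h1 : ∀ h : H, (starRingEnd ℂ) (φ (h • x)) * φ (h • x)
        = ((‖φ (h • x)‖)^2 : ℝ) := by
      intro h
      rw [mul_comm, Complex.mul_conj, ← Complex.normSq_eq_norm_sq]
    have h2 : (∫ h : H, (starRingEnd ℂ) (φ (h • x)) * φ (h • x) ∂μ)
        = ((∫ h : H, (‖φ (h • x)‖)^2 ∂μ : ℝ) : ℂ) := by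
      exact (integral_congr_ae (Filter.Eventually.of_forall h1)).trans integral_ofReal
    constructor
    · beta_reduce
      rw [h2, Complex.ofReal_re]
      exact integral_nonneg fun h => sq_nonneg _
    · beta_reduce
      rw [h2, Complex.ofReal_im]
  · intro φ hφ
    ext x
    have h2 : (∫ h : H, (‖φ (h • x)‖)^2 ∂μ : ℝ) = 0 := by
      have := hφ x
      have h1 : ∀ h : H, (starRingEnd ℂ) (φ (h • x)) * φ (h • x)
          = ((‖φ (h • x)‖)^2 : ℝ) := by
        intro h
        rw [mul_comm, Complex.mul_conj, ← Complex.normSq_eq_norm_sq]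
      have h3 : (∫ h : H, (starRingEnd ℂ) (φ (h • x)) * φ (h • x) ∂μ)
          = ((∫ h : H, (‖φ (h • x)‖)^2 ∂μ : ℝ) : ℂ) := by
        exact (integral_congr_ae (Filter.Eventually.of_forall h1)).trans integral_ofReal
      beta_reduce at this
      rw [this] at h3
      exact_mod_cast h3.symm
    -- the integrand is continuous, nonneg, and integrates to zero
    have hcont : Continuous (fun h : H => (‖φ (h • x)‖)^2) :=
      (continuous_norm.comp (φ.continuous.comp
        (continuous_id.smul continuous_const))).pow 2
    have hintR : Integrable (fun h : H => (‖φ (h • x)‖)^2) μ :=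
      hcont.integrable_of_hasCompactSupport (HasCompactSupport.of_compactSpace _)
    have hzero : (fun h : H => (‖φ (h • x)‖)^2) =ᵐ[μ] 0 :=
      (integral_eq_zero_iff_of_nonneg (fun h => sq_nonneg _) hintR).mp h2
    have hall : ∀ h : H, (‖φ (h • x)‖)^2 = 0 := by
      have := hcont.ae_eq_iff_eq μ continuous_const |>.mp hzero
      intro h; exact congrFun this h
    have := hall 1
    simp only [one_smul, pow_eq_zero_iff, map_eq_zero] at this
    simpa using this
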